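/- Every divisor on a finite connected multigraph is linearly equivalent to a unique q-reduced divisor, for any fixed vertex q. -/

import Mathlib

open Finset

/-- A finite loopless undirected multigraph on vertex set `V`, given by symmetric
edge multiplicities. -/
structure Multigraph (V : Type) where
  E : V → V → ℕ
  symm : ∀ u v, E u v = E v u
  loopless : ∀ v, E v v = 0

variable {V : Type} [Fintype V] [DecidableEq V]

/-- The valence (degree) of a vertex: number of incident edges. -/
def Multigraph.val (G : Multigraph V) (v : V) : ℕ := ∑ w, G.E v w

/-- Connectivity of a multigraph. -/
def Multigraph.Connected (G : Multigraph V) : Prop :=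
  ∀ u v : V, Relation.ReflTransGen (fun a b => 0 < G.E a b) u v

/-- Degree of a divisor. -/
def divDeg (D : V → ℤ) : ℤ := ∑ v, D v

/-- The graph Laplacian applied to a firing script. -/
def lap (G : Multigraph V) (σ : V → ℤ) : V → ℤ :=
  fun v => ∑ w, (G.E v w : ℤ) * (σ v - σ w)

/-- Lending move at `v`. -/
def lend (G : Multigraph V) (D : V → ℤ) (v : V) : V → ℤ :=
  fun w => if w = v then D v - (G.val v : ℤ) else D w + (G.E v w : ℤ)

/-- Borrowing move at `v`. -/
def borrow (G : Multigraph V) (D : V → ℤ) (v : V) : V → ℤ :=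
  fun w => if w = v then D v + (G.val v : ℤ) else D w - (G.E v w : ℤ)

/-- Linear equivalence: generated by lending moves. -/
def LinEquiv (G : Multigraph V) : (V → ℤ) → (V → ℤ) → Prop :=
  Relation.ReflTransGen (fun D D' => ∃ v, D' = lend G D v)

/-- Number of edges from `v` to vertices outside `S`. -/
def outdegS (G : Multigraph V) (S : Finset V) (v : V) : ℕ := ∑ w ∈ Sᶜ, G.E v w

/-- Fire all vertices of `S` simultaneously once. -/
def fireSet (G : Multigraph V) (D : V → ℤ) (S : Finset V) : V → ℤ :=
  fun v => if v ∈ S then D v - (outdegS G S v : ℤ) else D v + ∑ w ∈ S, (G.E v w : ℤ)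

/-- A divisor is `q`-reduced: nonnegative away from `q`, and no nonempty subset of
`V \ {q}` can be legally fired (every such `S` has a vertex with fewer chips than its
outdegree from `S`). -/
def QReduced (G : Multigraph V) (q : V) (D : V → ℤ) : Prop :=
  (∀ v, v ≠ q → 0 ≤ D v) ∧
  ∀ S : Finset V, S.Nonempty → (∀ v ∈ S, v ≠ q) → ∃ v ∈ S, D v < (outdegS G S v : ℤ)


set_option linter.unusedSectionVars false
set_option maxHeartbeats 1000000

section Helpers

variable {V : Type} [Fintype V] [DecidableEq V]

lemma lap_add (G : Multigraph V) (σ τ : V → ℤ) (v : V) :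
    lap G (fun w => σ w + τ w) v = lap G σ v + lap G τ v := by
  unfold lap
  rw [← Finset.sum_add_distrib]
  exact Finset.sum_congr rfl fun w _ => by ring

lemma lap_const (G : Multigraph V) (c : ℤ) (v : V) :
    lap G (fun _ => c) v = 0 := by
  unfold lap; simp

lemma lap_neg (G : Multigraph V) (σ : V → ℤ) (v : V) :
    lap G (fun w => - σ w) v = - lap G σ v := by
  unfold lap
  rw [← Finset.sum_neg_distrib]
  exact Finset.sum_congr rfl fun w _ => by ring

lemma lap_smul (G : Multigraph V) (k : ℤ) (σ : V → ℤ) (v : V) :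
    lap G (fun w => k * σ w) v = k * lap G σ v := by
  unfold lap
  rw [Finset.mul_sum]
  exact Finset.sum_congr rfl fun w _ => by ring

lemma lap_indicator (G : Multigraph V) (v u : V) :
    lap G (fun w => if w = v then 1 else 0) u
      = if u = v then (G.val v : ℤ) else - (G.E u v : ℤ) := by
  unfold lap
  by_cases h : u = v
  · subst h
    simp [Multigraph.val, mul_sub, Finset.sum_sub_distrib, Finset.sum_ite_eq',
      G.loopless]
  · simp [h, Finset.sum_ite_eq', mul_sub, Finset.sum_sub_distrib]

/-- lend is subtracting the Laplacian of an indicator. -/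
lemma lend_eq (G : Multigraph V) (D : V → ℤ) (v : V) :
    lend G D v = fun u => D u - lap G (fun w => if w = v then 1 else 0) u := by
  funext u
  rw [lap_indicator]
  by_cases h : u = v
  · subst h; simp [lend]
  · simp [lend, h, G.symm u v]

end Helpers
section EquivChar

variable {V : Type} [Fintype V] [DecidableEq V]

lemma linEquiv_sub_lap_nat (G : Multigraph V) :
    ∀ (n : ℕ) (D : V → ℤ) (σ : V → ℕ), (∑ v, σ v = n) →
    LinEquiv G D (fun u => D u - lap G (fun w => (σ w : ℤ)) u) := by
  intro n
  induction n using Nat.strong_induction_on with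
  | _ n ih =>
    intro D σ hσ
    by_cases h : ∀ v, σ v = 0
    · have hz : (fun u => D u - lap G (fun w => (σ w : ℤ)) u) = D := by
        funext u
        have h0 : (fun w => (σ w : ℤ)) = fun _ => (0 : ℤ) :=
          funext fun w => by simp [h w]
        rw [h0, lap_const]; ring
      rw [hz]
      exact Relation.ReflTransGen.refl
    · push_neg at h
      obtain ⟨v, hv⟩ := h
      set σ' : V → ℕ := fun w => if w = v then σ v - 1 else σ w with hσ'
      have hsum : (∑ w, σ' w) + 1 = n := by
        rw [← hσ, ← Finset.sum_erase_add _ _ (Finset.mem_univ v),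
          ← Finset.sum_erase_add _ σ (Finset.mem_univ v)]
        have he : ∑ w ∈ Finset.univ.erase v, σ' w
            = ∑ w ∈ Finset.univ.erase v, σ w := by
          refine Finset.sum_congr rfl fun w hw => ?_
          simp [σ', (Finset.mem_erase.mp hw).1]
        rw [he]
        simp only [σ', if_pos rfl]
        omega
      have hdec : ∀ u, (lap G (fun w => (σ w : ℤ))) u
          = lap G (fun w => if w = v then 1 else 0) u
            + lap G (fun w => (σ' w : ℤ)) u := by
        intro u
        rw [← lap_add]
        congr 1
        funext w
        by_cases hw : w = v
        · subst hw
          simp [σ']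
          omega
        · simp [σ', hw]
      have step : LinEquiv G (lend G D v)
          (fun u => lend G D v u - lap G (fun w => (σ' w : ℤ)) u) := by
        have hn1 : ∑ w, σ' w = n - 1 := by omega
        exact ih (n - 1) (by omega) _ σ' hn1
      have heq : (fun u => lend G D v u - lap G (fun w => (σ' w : ℤ)) u)
          = (fun u => D u - lap G (fun w => (σ w : ℤ)) u) := by
        funext u
        rw [lend_eq, hdec]
        ring
      rw [heq] at step
      exact Relation.ReflTransGen.head ⟨v, rfl⟩ step

lemma linEquiv_sub_lap (G : Multigraph V) (D : V → ℤ) (σ : V → ℤ) :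
    LinEquiv G D (fun u => D u - lap G σ u) := by
  set K : ℕ := Finset.univ.sup fun v => (-σ v).toNat with hK
  have hτ : ∀ v, ((σ v + K).toNat : ℤ) = σ v + K := by
    intro v
    have : (-σ v).toNat ≤ K :=
      Finset.le_sup (f := fun v => (-σ v).toNat) (Finset.mem_univ v)
    omega
  have h := linEquiv_sub_lap_nat G (∑ v, (σ v + K).toNat) D
    (fun v => (σ v + K).toNat) rfl
  have heq : (fun u => D u - lap G (fun w => (((σ w + K).toNat : ℕ) : ℤ)) u)
      = fun u => D u - lap G σ u := by
    funext u
    have h1 : (fun w => (((σ w + K).toNat : ℕ) : ℤ)) = fun w => σ w + (K : ℤ) :=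
      funext fun w => hτ w
    rw [h1, lap_add G σ (fun _ => (K : ℤ)), lap_const]
    ring
  rwa [heq] at h

lemma linEquiv_iff (G : Multigraph V) (D D' : V → ℤ) :
    LinEquiv G D D' ↔ ∃ σ : V → ℤ, ∀ u, D' u = D u - lap G σ u := by
  constructor
  · intro h
    induction h with
    | refl => exact ⟨fun _ => 0, fun u => by rw [lap_const]; ring⟩
    | tail hab hbc ih =>
      obtain ⟨σ, hσ⟩ := ih
      obtain ⟨v, rfl⟩ := hbc
      refine ⟨fun w => σ w + if w = v then 1 else 0, fun u => ?_⟩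
      rw [lend_eq]
      simp only
      rw [hσ u, lap_add]
      ring
  · rintro ⟨σ, hσ⟩
    have : D' = fun u => D u - lap G σ u := funext hσ
    rw [this]
    exact linEquiv_sub_lap G D σ

end EquivChar
section Distance

variable {V : Type} [Fintype V] [DecidableEq V]

/-- Reachable from `q` in at most `k` steps. -/
def reachN (G : Multigraph V) (q : V) : ℕ → V → Prop
  | 0, v => v = q
  | k+1, v => reachN G q k v ∨ ∃ w, 0 < G.E w v ∧ reachN G q k w

lemma reachN_zero (G : Multigraph V) (q v : V) : reachN G q 0 v ↔ v = q :=
  Iff.rfl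

lemma reachN_succ (G : Multigraph V) (q v : V) (k : ℕ) :
    reachN G q (k+1) v ↔ reachN G q k v ∨ ∃ w, 0 < G.E w v ∧ reachN G q k w :=
  Iff.rfl

lemma reachN_exists (G : Multigraph V) (hG : G.Connected) (q v : V) :
    ∃ k, reachN G q k v := by
  have h := hG q v
  induction h with
  | refl => exact ⟨0, rfl⟩
  | tail hab hbc ih =>
    obtain ⟨k, hk⟩ := ih
    exact ⟨k + 1, Or.inr ⟨_, hbc, hk⟩⟩

open Classical in
/-- Graph distance from `q`. -/
noncomputable def distTo (G : Multigraph V) (q v : V) : ℕ :=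
  if h : ∃ k, reachN G q k v then Nat.find h else 0

lemma distTo_spec (G : Multigraph V) (hG : G.Connected) (q v : V) :
    reachN G q (distTo G q v) v := by
  classical
  rw [distTo, dif_pos (reachN_exists G hG q v)]
  exact Nat.find_spec (reachN_exists G hG q v)

lemma distTo_le (G : Multigraph V) (q v : V) (k : ℕ) (h : reachN G q k v) :
    distTo G q v ≤ k := by
  classical
  rw [distTo, dif_pos ⟨k, h⟩]
  exact Nat.find_le h

lemma distTo_q (G : Multigraph V) (q : V) : distTo G q q = 0 :=
  Nat.le_zero.mp (distTo_le G q q 0 rfl)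

lemma distTo_adj (G : Multigraph V) (hG : G.Connected) (q u v : V)
    (h : 0 < G.E u v) : distTo G q v ≤ distTo G q u + 1 :=
  distTo_le G q v _ (Or.inr ⟨u, h, distTo_spec G hG q u⟩)

lemma distTo_pred (G : Multigraph V) (hG : G.Connected) (q v : V) (hv : v ≠ q) :
    ∃ w, 0 < G.E v w ∧ distTo G q w < distTo G q v := by
  classical
  have he : ∃ k, reachN G q k v := reachN_exists G hG q v
  have hspec := distTo_spec G hG q v
  have hpos : 0 < distTo G q v := by
    rcases Nat.eq_zero_or_pos (distTo G q v) with h | h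
    · rw [h] at hspec
      exact absurd hspec hv
    · exact h
  obtain ⟨k, hk⟩ : ∃ k, distTo G q v = k + 1 := ⟨distTo G q v - 1, by omega⟩
  rw [hk] at hspec
  rcases hspec with h' | ⟨w, hw, hrw⟩
  · have := distTo_le G q v k h'
    omega
  · refine ⟨w, ?_, ?_⟩
    · rw [G.symm]; exact hw
    · have := distTo_le G q w k hrw
      omega

end Distance
section Weight

variable {V : Type} [Fintype V] [DecidableEq V]

lemma sum_Ioc_split (f : ℕ → ℤ) {a b c : ℕ} (h1 : a ≤ b) (h2 : b ≤ c) :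
    ∑ j ∈ Finset.Ioc a c, f j
      = (∑ j ∈ Finset.Ioc a b, f j) + ∑ j ∈ Finset.Ioc b c, f j := by
  rw [← Finset.Ioc_union_Ioc_eq_Ioc h1 h2, Finset.sum_union]
  rw [Finset.disjoint_left]
  intro x hx hx'
  rw [Finset.mem_Ioc] at hx hx'
  omega

/-- Base for the weight function. -/
def wtC (G : Multigraph V) : ℕ := Finset.univ.sup G.val + 1

/-- Exponent bound. -/
noncomputable def wtN (G : Multigraph V) (q : V) : ℕ :=
  Finset.univ.sup (distTo G q) + 1

/-- Geometric weights. -/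
noncomputable def wtg (G : Multigraph V) (q : V) (j : ℕ) : ℤ :=
  (wtC G : ℤ) ^ (wtN G q - j)

/-- The superharmonic-off-`q` potential. -/
noncomputable def wt (G : Multigraph V) (q : V) (v : V) : ℤ :=
  ∑ j ∈ Finset.Ioc 0 (distTo G q v), wtg G q j

lemma one_le_wtC (G : Multigraph V) : (1 : ℤ) ≤ (wtC G : ℤ) := by
  unfold wtC; exact_mod_cast Nat.succ_le_succ (Nat.zero_le _)

lemma one_le_wtg (G : Multigraph V) (q : V) (j : ℕ) : (1 : ℤ) ≤ wtg G q j := by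
  unfold wtg
  calc (1 : ℤ) = 1 ^ (wtN G q - j) := (one_pow _).symm
  _ ≤ (wtC G : ℤ) ^ (wtN G q - j) :=
    pow_le_pow_left₀ (by norm_num) (one_le_wtC G) _

lemma wt_q (G : Multigraph V) (q : V) : wt G q q = 0 := by
  unfold wt
  rw [distTo_q]
  simp

lemma wt_nonneg (G : Multigraph V) (q v : V) : 0 ≤ wt G q v :=
  Finset.sum_nonneg fun j _ => le_trans zero_le_one (one_le_wtg G q j)

lemma wt_mono (G : Multigraph V) (q : V) {w v : V}
    (h : distTo G q w ≤ distTo G q v) : wt G q w ≤ wt G q v := by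
  unfold wt
  rw [sum_Ioc_split (wtg G q) (Nat.zero_le _) h]
  have : 0 ≤ ∑ j ∈ Finset.Ioc (distTo G q w) (distTo G q v), wtg G q j :=
    Finset.sum_nonneg fun j _ => le_trans zero_le_one (one_le_wtg G q j)
  omega

lemma wt_gap_lt (G : Multigraph V) (q : V) {w v : V}
    (h : distTo G q w < distTo G q v) :
    wt G q w + wtg G q (distTo G q v) ≤ wt G q v := by
  unfold wt
  rw [sum_Ioc_split (wtg G q) (Nat.zero_le _) (le_of_lt h)]
  have hmem : distTo G q v ∈ Finset.Ioc (distTo G q w) (distTo G q v) :=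
    Finset.mem_Ioc.mpr ⟨h, le_refl _⟩
  have := Finset.single_le_sum
    (f := wtg G q)
    (fun j _ => le_trans zero_le_one (one_le_wtg G q j)) hmem
  omega

lemma wt_gap_adj (G : Multigraph V) (q : V) {w v : V}
    (h : distTo G q w ≤ distTo G q v + 1) :
    wt G q w ≤ wt G q v + wtg G q (distTo G q v + 1) := by
  by_cases h' : distTo G q w ≤ distTo G q v
  · have := wt_mono G q h'
    have := one_le_wtg G q (distTo G q v + 1)
    omega
  · have heq : distTo G q w = distTo G q v + 1 := by omega
    unfold wt
    rw [heq, Finset.sum_Ioc_succ_top (Nat.zero_le _)]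

lemma dv_le_N (G : Multigraph V) (q v : V) :
    distTo G q v + 1 ≤ wtN G q := by
  unfold wtN
  have : distTo G q v ≤ Finset.univ.sup (distTo G q) :=
    Finset.le_sup (Finset.mem_univ v)
  omega

lemma wtg_step (G : Multigraph V) (q : V) {k : ℕ} (hk : k + 1 ≤ wtN G q) :
    wtg G q k = (wtC G : ℤ) * wtg G q (k + 1) := by
  unfold wtg
  have : wtN G q - k = (wtN G q - (k + 1)) + 1 := by omega
  rw [this, pow_succ]
  ring

lemma val_le_wtC (G : Multigraph V) (v : V) : (G.val v : ℤ) + 1 ≤ (wtC G : ℤ) := by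
  unfold wtC
  have : G.val v ≤ Finset.univ.sup G.val := Finset.le_sup (Finset.mem_univ v)
  exact_mod_cast Nat.succ_le_succ this

/-- Key superharmonicity: the Laplacian of `wt` is at least 1 away from `q`. -/
lemma lap_wt_pos (G : Multigraph V) (hG : G.Connected) (q v : V) (hv : v ≠ q) :
    1 ≤ lap G (wt G q) v := by
  obtain ⟨w0, hw0e, hw0d⟩ := distTo_pred G hG q v hv
  have hg1pos : (1:ℤ) ≤ wtg G q (distTo G q v + 1) := one_le_wtg G q _
  have hgdpos : (1:ℤ) ≤ wtg G q (distTo G q v) := one_le_wtg G q _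
  -- bound each term away from w0
  have hterm : ∀ w, (G.E v w : ℤ) * (-(wtg G q (distTo G q v + 1)))
      ≤ (G.E v w : ℤ) * (wt G q v - wt G q w) := by
    intro w
    rcases Nat.eq_zero_or_pos (G.E v w) with h0 | hpos
    · rw [h0]; simp
    · refine mul_le_mul_of_nonneg_left ?_ (by positivity)
      have hadj : distTo G q w ≤ distTo G q v + 1 := distTo_adj G hG q v w hpos
      have := wt_gap_adj G q hadj
      omega
  -- the w0 term
  have hw0term : wtg G q (distTo G q v) ≤ (G.E v w0 : ℤ) * (wt G q v - wt G q w0) := by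
    have hdiff : wtg G q (distTo G q v) ≤ wt G q v - wt G q w0 := by
      have := wt_gap_lt G q hw0d
      omega
    have h1 : (1 : ℤ) ≤ (G.E v w0 : ℤ) := by exact_mod_cast hw0e
    calc wtg G q (distTo G q v) = 1 * wtg G q (distTo G q v) := (one_mul _).symm
    _ ≤ (G.E v w0 : ℤ) * (wt G q v - wt G q w0) :=
      mul_le_mul h1 hdiff (by omega) (by positivity)
  -- split the sum
  have hsplit : lap G (wt G q) v
      = (∑ w ∈ Finset.univ.erase w0, (G.E v w : ℤ) * (wt G q v - wt G q w))
        + (G.E v w0 : ℤ) * (wt G q v - wt G q w0) := by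
    unfold lap
    rw [Finset.sum_erase_add _ _ (Finset.mem_univ w0)]
  have herase : -((G.val v : ℤ) * wtg G q (distTo G q v + 1))
      ≤ ∑ w ∈ Finset.univ.erase w0, (G.E v w : ℤ) * (wt G q v - wt G q w) := by
    have h1 : ∑ w ∈ Finset.univ.erase w0, (G.E v w : ℤ) * (-(wtg G q (distTo G q v + 1)))
        ≤ ∑ w ∈ Finset.univ.erase w0, (G.E v w : ℤ) * (wt G q v - wt G q w) :=
      Finset.sum_le_sum fun w _ => hterm w
    have h2 : ∑ w ∈ Finset.univ.erase w0, (G.E v w : ℤ) * (-(wtg G q (distTo G q v + 1)))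
        = -((∑ w ∈ Finset.univ.erase w0, (G.E v w : ℤ)) * wtg G q (distTo G q v + 1)) := by
      rw [Finset.sum_mul, ← Finset.sum_neg_distrib]
      exact Finset.sum_congr rfl fun w _ => by ring
    have h3 : ∑ w ∈ Finset.univ.erase w0, (G.E v w : ℤ) ≤ (G.val v : ℤ) := by
      have hval : (G.val v : ℤ) = ∑ w, (G.E v w : ℤ) := by
        unfold Multigraph.val; push_cast; rfl
      rw [hval, ← Finset.sum_erase_add _ _ (Finset.mem_univ w0)]
      have : (0:ℤ) ≤ (G.E v w0 : ℤ) := by positivity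
      omega
    have h4 : (∑ w ∈ Finset.univ.erase w0, (G.E v w : ℤ)) * wtg G q (distTo G q v + 1)
        ≤ (G.val v : ℤ) * wtg G q (distTo G q v + 1) :=
      mul_le_mul_of_nonneg_right h3 (by omega)
    omega
  -- combine
  have hstep : wtg G q (distTo G q v) = (wtC G : ℤ) * wtg G q (distTo G q v + 1) :=
    wtg_step G q (by have := dv_le_N G q v; omega)
  have hval : (G.val v : ℤ) + 1 ≤ (wtC G : ℤ) := val_le_wtC G v
  have key : 1 ≤ wtg G q (distTo G q v) - (G.val v : ℤ) * wtg G q (distTo G q v + 1) := by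
    rw [hstep]
    nlinarith [mul_le_mul_of_nonneg_right (show (G.val v : ℤ) + 1 ≤ (wtC G : ℤ) from hval)
      (show (0:ℤ) ≤ wtg G q (distTo G q v + 1) by omega)]
  rw [hsplit]
  omega

end Weight
section Bilinear

variable {V : Type} [Fintype V] [DecidableEq V]

lemma sum_ite_compl (S : Finset V) (f : V → ℤ) :
    ∑ w, (if w ∈ S then 0 else f w) = ∑ w ∈ Sᶜ, f w := by
  rw [Finset.sum_ite]
  simp only [Finset.sum_const_zero, zero_add]
  congr 1
  ext w
  simp

lemma sum_lap_mul_comm (G : Multigraph V) (σ τ : V → ℤ) :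
    ∑ v, lap G σ v * τ v = ∑ v, lap G τ v * σ v := by
  unfold lap
  have expand : ∀ (σ τ : V → ℤ), ∑ v, (∑ w, (G.E v w : ℤ) * (σ v - σ w)) * τ v
      = (∑ v, ∑ w, (G.E v w : ℤ) * (σ v * τ v))
        - ∑ v, ∑ w, (G.E v w : ℤ) * (σ w * τ v) := by
    intro σ τ
    rw [← Finset.sum_sub_distrib]
    refine Finset.sum_congr rfl fun v _ => ?_
    rw [Finset.sum_mul, ← Finset.sum_sub_distrib]
    exact Finset.sum_congr rfl fun w _ => by ring
  rw [expand σ τ, expand τ σ]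
  have hA : ∑ v, ∑ w, (G.E v w : ℤ) * (σ v * τ v)
      = ∑ v, ∑ w, (G.E v w : ℤ) * (τ v * σ v) :=
    Finset.sum_congr rfl fun v _ => Finset.sum_congr rfl fun w _ => by ring
  have hB : ∑ v, ∑ w, (G.E v w : ℤ) * (σ w * τ v)
      = ∑ v, ∑ w, (G.E v w : ℤ) * (τ w * σ v) := by
    rw [Finset.sum_comm]
    refine Finset.sum_congr rfl fun a _ => Finset.sum_congr rfl fun b _ => ?_
    rw [G.symm a b]
    ring
  rw [hA, hB]

lemma lap_indS (G : Multigraph V) (S : Finset V) (u : V) :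
    lap G (fun w => if w ∈ S then (1:ℤ) else 0) u
      = if u ∈ S then (outdegS G S u : ℤ) else -(∑ w ∈ S, (G.E u w : ℤ)) := by
  unfold lap
  by_cases hu : u ∈ S
  · rw [if_pos hu]
    have : ∀ w, (G.E u w : ℤ) * ((if u ∈ S then (1:ℤ) else 0) - (if w ∈ S then (1:ℤ) else 0))
        = if w ∈ S then 0 else (G.E u w : ℤ) := by
      intro w
      rw [if_pos hu]
      by_cases hw : w ∈ S <;> simp [hw]
    rw [Finset.sum_congr rfl fun w _ => this w, sum_ite_compl]
    unfold outdegS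
    push_cast
    rfl
  · rw [if_neg hu]
    have : ∀ w, (G.E u w : ℤ) * ((if u ∈ S then (1:ℤ) else 0) - (if w ∈ S then (1:ℤ) else 0))
        = -(if w ∈ S then (G.E u w : ℤ) else 0) := by
      intro w
      rw [if_neg hu]
      by_cases hw : w ∈ S <;> simp [hw]
    rw [Finset.sum_congr rfl fun w _ => this w, Finset.sum_neg_distrib]
    congr 1
    rw [Finset.sum_ite, Finset.sum_const_zero, add_zero]
    congr 1
    ext w
    simp

lemma fireSet_eq (G : Multigraph V) (D : V → ℤ) (S : Finset V) :
    fireSet G D S = fun u => D u - lap G (fun w => if w ∈ S then (1:ℤ) else 0) u := by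
  funext u
  rw [lap_indS]
  unfold fireSet
  by_cases hu : u ∈ S <;> simp [hu]

/-- Firing a nonempty set avoiding `q` strictly decreases the `wt`-potential. -/
lemma one_le_sum_wt_lap_ind (G : Multigraph V) (hG : G.Connected) (q : V)
    (S : Finset V) (hS : S.Nonempty) (hSq : ∀ v ∈ S, v ≠ q) :
    1 ≤ ∑ v, wt G q v * lap G (fun w => if w ∈ S then (1:ℤ) else 0) v := by
  have h1 : ∑ v, wt G q v * lap G (fun w => if w ∈ S then (1:ℤ) else 0) v
      = ∑ v, lap G (wt G q) v * (if v ∈ S then (1:ℤ) else 0) := by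
    rw [← sum_lap_mul_comm]
    exact Finset.sum_congr rfl fun v _ => by ring
  rw [h1]
  have h2 : ∑ v, lap G (wt G q) v * (if v ∈ S then (1:ℤ) else 0)
      = ∑ v ∈ S, lap G (wt G q) v := by
    rw [Finset.sum_congr rfl (fun v _ => by
      show lap G (wt G q) v * (if v ∈ S then (1:ℤ) else 0)
        = if v ∈ S then lap G (wt G q) v else 0
      by_cases hv : v ∈ S <;> simp [hv]),
      Finset.sum_ite, Finset.sum_const_zero, add_zero]
    congr 1
    ext w
    simp
  rw [h2]
  calc (1:ℤ) = ∑ _v ∈ S, (0:ℤ) + 1 := by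
        rw [Finset.sum_const_zero]; ring
  _ ≤ ∑ v ∈ S, lap G (wt G q) v := by
        rw [Finset.sum_const_zero, zero_add]
        obtain ⟨v0, hv0⟩ := hS
        calc (1:ℤ) ≤ lap G (wt G q) v0 := lap_wt_pos G hG q v0 (hSq v0 hv0)
        _ ≤ ∑ v ∈ S, lap G (wt G q) v := by
            refine Finset.single_le_sum (f := fun v => lap G (wt G q) v) ?_ hv0
            intro i hi
            exact le_trans zero_le_one (lap_wt_pos G hG q i (hSq i hi))

end Bilinear
section Existence

variable {V : Type} [Fintype V] [DecidableEq V]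

lemma linEquiv_of_two (G : Multigraph V) {D A B : V → ℤ}
    (hA : LinEquiv G D A) (hB : LinEquiv G D B) : LinEquiv G A B := by
  rw [linEquiv_iff] at hA hB ⊢
  obtain ⟨σ1, h1⟩ := hA
  obtain ⟨σ2, h2⟩ := hB
  refine ⟨fun w => σ2 w + -σ1 w, fun u => ?_⟩
  rw [lap_add, lap_neg, h1 u, h2 u]
  ring

lemma phi_nonneg (G : Multigraph V) (q : V) (D' : V → ℤ)
    (heff : ∀ v, v ≠ q → 0 ≤ D' v) : 0 ≤ ∑ v, wt G q v * D' v :=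
  Finset.sum_nonneg fun v _ => by
    by_cases hv : v = q
    · subst hv; rw [wt_q]; simp
    · exact mul_nonneg (wt_nonneg G q v) (heff v hv)

lemma exists_qreduced (G : Multigraph V) (hG : G.Connected) (q : V) (D : V → ℤ) :
    ∃ D', LinEquiv G D D' ∧ QReduced G q D' := by
  classical
  set K : ℕ := Finset.univ.sup fun u => (-D u).toNat with hK
  set D1 : V → ℤ := fun u => D u + (K : ℤ) * lap G (wt G q) u with hD1
  have hD1equiv : LinEquiv G D D1 := by
    have h := linEquiv_sub_lap G D (fun w => (-(K:ℤ)) * wt G q w)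
    have heq : (fun u => D u - lap G (fun w => (-(K:ℤ)) * wt G q w) u) = D1 := by
      funext u
      rw [lap_smul]
      simp only [hD1]
      ring
    rwa [heq] at h
  have hD1eff : ∀ v, v ≠ q → 0 ≤ D1 v := by
    intro v hv
    have h1 : 1 ≤ lap G (wt G q) v := lap_wt_pos G hG q v hv
    have h2 : (-D v).toNat ≤ K :=
      Finset.le_sup (f := fun u => (-D u).toNat) (Finset.mem_univ v)
    have h3 : (K:ℤ) * 1 ≤ (K:ℤ) * lap G (wt G q) v :=
      mul_le_mul_of_nonneg_left h1 (by positivity)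
    simp only [hD1]
    omega
  set P : ℕ → Prop := fun m => ∃ D', LinEquiv G D D' ∧ (∀ v, v ≠ q → 0 ≤ D' v) ∧
    ∑ v, wt G q v * D' v = (m:ℤ) with hPdef
  have hP : ∃ m, P m :=
    ⟨(∑ v, wt G q v * D1 v).toNat, D1, hD1equiv, hD1eff,
      by rw [Int.toNat_of_nonneg (phi_nonneg G q D1 hD1eff)]⟩
  obtain ⟨D', hDeq, heff, hphi⟩ := Nat.find_spec hP
  refine ⟨D', hDeq, heff, ?_⟩
  intro S hS hSq
  by_contra hcon
  push_neg at hcon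
  set D'' : V → ℤ := fireSet G D' S with hD''
  have hD''eq : D'' = fun u => D' u - lap G (fun w => if w ∈ S then (1:ℤ) else 0) u := by
    rw [hD'']; exact fireSet_eq G D' S
  have hequiv'' : LinEquiv G D D'' :=
    Relation.ReflTransGen.trans hDeq
      (by rw [hD''eq]; exact linEquiv_sub_lap G D' _)
  have heff'' : ∀ v, v ≠ q → 0 ≤ D'' v := by
    intro v hv
    rw [hD'']
    unfold fireSet
    by_cases hvS : v ∈ S
    · rw [if_pos hvS]
      have := hcon v hvS
      omega
    · rw [if_neg hvS]
      have h1 : (0:ℤ) ≤ ∑ w ∈ S, (G.E v w:ℤ) :=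
        Finset.sum_nonneg fun w _ => by positivity
      have := heff v hv
      omega
  have hdec : ∑ v, wt G q v * D'' v ≤ (Nat.find hP : ℤ) - 1 := by
    have hsplit : ∑ v, wt G q v * D'' v
        = (∑ v, wt G q v * D' v)
          - ∑ v, wt G q v * lap G (fun w => if w ∈ S then (1:ℤ) else 0) v := by
      rw [hD''eq, ← Finset.sum_sub_distrib]
      exact Finset.sum_congr rfl fun v _ => by ring
    have h1 := one_le_sum_wt_lap_ind G hG q S hS hSq
    rw [hsplit, hphi]
    omega
  have hnn := phi_nonneg G q D'' heff''
  have hPm : P (∑ v, wt G q v * D'' v).toNat :=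
    ⟨D'', hequiv'', heff'', by rw [Int.toNat_of_nonneg hnn]⟩
  have hlt : (∑ v, wt G q v * D'' v).toNat < Nat.find hP := by omega
  exact Nat.find_min hP hlt hPm

end Existence
section Uniqueness

variable {V : Type} [Fintype V] [DecidableEq V]

lemma qreduced_unique (G : Multigraph V) (q : V) {D1 D2 : V → ℤ}
    (h12 : LinEquiv G D1 D2) (h1 : QReduced G q D1) (h2 : QReduced G q D2) :
    D1 = D2 := by
  classical
  rw [linEquiv_iff] at h12
  obtain ⟨σ, hσ⟩ := h12
  by_cases hc : ∀ v, σ v = σ q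
  · funext u
    have hl : lap G σ u = 0 := by
      have hconst : σ = fun _ => σ q := funext hc
      rw [hconst, lap_const]
    rw [hσ u, hl]; ring
  · push_neg at hc
    obtain ⟨v0, hv0⟩ := hc
    have hne : (Finset.univ : Finset V).Nonempty := ⟨q, Finset.mem_univ q⟩
    set M := Finset.univ.sup' hne σ with hM
    set m := Finset.univ.inf' hne σ with hm
    have hleM : ∀ v, σ v ≤ M := fun v => Finset.le_sup' σ (Finset.mem_univ v)
    have hgem : ∀ v, m ≤ σ v := fun v => Finset.inf'_le σ (Finset.mem_univ v)
    have hmM : m < M := by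
      rcases lt_or_ge m M with h | h
      · exact h
      · exfalso; apply hv0
        have h1 := hleM v0; have h2 := hgem v0
        have h3 := hleM q; have h4 := hgem q
        omega
    obtain ⟨vM, _, hvM⟩ := Finset.exists_mem_eq_sup' hne σ
    obtain ⟨vm, _, hvm⟩ := Finset.exists_mem_eq_inf' hne σ
    exfalso
    by_cases hqM : σ q = M
    · -- q is in the max set; use the min set against D2's reducedness
      set S := Finset.univ.filter (fun v => σ v = m) with hS
      have hSne : S.Nonempty := ⟨vm, by simp [hS, hvm.symm, hm]⟩
      have hSq : ∀ v ∈ S, v ≠ q := by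
        intro v hv hveq
        have hvm' : σ v = m := (Finset.mem_filter.mp hv).2
        rw [hveq, hqM] at hvm'
        omega
      obtain ⟨v, hvS, hlt⟩ := h2.2 S hSne hSq
      have hvS' : σ v = m := (Finset.mem_filter.mp hvS).2
      have hlap : lap G σ v ≤ -(outdegS G S v : ℤ) := by
        unfold lap
        have hterm : ∀ w, (G.E v w : ℤ) * (σ v - σ w)
            ≤ (if w ∈ S then 0 else -(G.E v w : ℤ)) := by
          intro w
          by_cases hw : w ∈ S
          · rw [if_pos hw]
            have hwm : σ w = m := (Finset.mem_filter.mp hw).2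
            rw [hvS', hwm]
            simp
          · rw [if_neg hw]
            have hwm : σ w ≠ m := fun h => hw (Finset.mem_filter.mpr ⟨Finset.mem_univ w, h⟩)
            have h1 : σ v - σ w ≤ -1 := by
              have := hgem w
              rw [hvS']
              omega
            have h2 := mul_le_mul_of_nonneg_left h1 (show (0:ℤ) ≤ (G.E v w : ℤ) by positivity)
            linarith
        calc ∑ w, (G.E v w : ℤ) * (σ v - σ w)
            ≤ ∑ w, (if w ∈ S then 0 else -(G.E v w : ℤ)) :=
              Finset.sum_le_sum fun w _ => hterm w
        _ = ∑ w ∈ Sᶜ, -(G.E v w : ℤ) := sum_ite_compl S _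
        _ = -(outdegS G S v : ℤ) := by
              rw [Finset.sum_neg_distrib]
              unfold outdegS
              push_cast
              rfl
      have hD1v : 0 ≤ D1 v := h1.1 v (hSq v hvS)
      have hD2v : D2 v = D1 v - lap G σ v := hσ v
      omega
    · -- q is not in the max set; use the max set against D1's reducedness
      set S := Finset.univ.filter (fun v => σ v = M) with hS
      have hSne : S.Nonempty := ⟨vM, by simp [hS, hvM.symm, hM]⟩
      have hSq : ∀ v ∈ S, v ≠ q := by
        intro v hv hveq
        have hvM' : σ v = M := (Finset.mem_filter.mp hv).2
        rw [hveq] at hvM'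
        exact hqM hvM'
      obtain ⟨v, hvS, hlt⟩ := h1.2 S hSne hSq
      have hvS' : σ v = M := (Finset.mem_filter.mp hvS).2
      have hlap : (outdegS G S v : ℤ) ≤ lap G σ v := by
        unfold lap
        have hterm : ∀ w, (if w ∈ S then 0 else (G.E v w : ℤ))
            ≤ (G.E v w : ℤ) * (σ v - σ w) := by
          intro w
          by_cases hw : w ∈ S
          · rw [if_pos hw]
            have hwM : σ w = M := (Finset.mem_filter.mp hw).2
            rw [hvS', hwM]
            simp
          · rw [if_neg hw]
            have hwM : σ w ≠ M := fun h => hw (Finset.mem_filter.mpr ⟨Finset.mem_univ w, h⟩)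
            have h1 : (1:ℤ) ≤ σ v - σ w := by
              have := hleM w
              rw [hvS']
              omega
            have h2 := mul_le_mul_of_nonneg_left h1 (show (0:ℤ) ≤ (G.E v w : ℤ) by positivity)
            linarith
        calc (outdegS G S v : ℤ)
            = ∑ w ∈ Sᶜ, (G.E v w : ℤ) := by unfold outdegS; push_cast; rfl
        _ = ∑ w, (if w ∈ S then 0 else (G.E v w : ℤ)) := (sum_ite_compl S _).symm
        _ ≤ ∑ w, (G.E v w : ℤ) * (σ v - σ w) :=
              Finset.sum_le_sum fun w _ => hterm w
      have hD2v : 0 ≤ D2 v := h2.1 v (hSq v hvS)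
      have hD2v' : D2 v = D1 v - lap G σ v := hσ v
      omega

end Uniqueness
/-- Every divisor on a finite connected multigraph is linearly equivalent to a unique
`q`-reduced divisor, for any fixed vertex `q`. -/
theorem exists_unique_qreduced (G : Multigraph V) (hG : G.Connected) (q : V)
    (D : V → ℤ) : ∃! D' : V → ℤ, LinEquiv G D D' ∧ QReduced G q D' := by
  obtain ⟨D', h1, h2⟩ := exists_qreduced G hG q D
  refine ⟨D', ⟨h1, h2⟩, ?_⟩
  rintro D'' ⟨he, hr⟩
  exact qreduced_unique G q (linEquiv_of_two G he h1) hr h2
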